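/- Let r be a positive integer, H(r) = ⟨δ₁, δ₂, δ₃ ∣ [δ₁,δ₃] = [δ₂,δ₃] = 1, [δ₁,δ₂] = δ₃^r⟩, and let Γ₀ ⊆ H(r) be a normal subgroup of finite index; put G₀ = H(r)/Γ₀. Then there are integers a₁, a₂, a₃, b₁, b₂, b₃ with a₁b₂ − a₂b₁ ≠ 0 and an integer c > 0 such that Γ₀ is generated by δ₁^{a₁}δ₂^{a₂}δ₃^{a₃}, δ₁^{b₁}δ₂^{b₂}δ₃^{b₃}, and δ₃^c. Moreover, c divides r·gcd(a₁, a₂, b₁, b₂), one has Γ₀ ≅ H(r·|a₁b₂ − a₂b₁|/c), and the group G₀ contains a normal abelian subgroup of index at most gcd(a₁, b₁). -/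

import Mathlib

/-- The "discrete Heisenberg group" H(r): the group with presentation
⟨δ₁, δ₂, δ₃ ∣ [δ₁,δ₃] = [δ₂,δ₃] = 1, [δ₁,δ₂] = δ₃^r⟩, realized concretely as the
group of upper unitriangular 3×3 rational matrices with (1,2)-entry `a ∈ ℤ`,
(2,3)-entry `b ∈ ℤ` and (1,3)-entry `c/r` with `c ∈ ℤ`; the element ⟨a, b, c⟩
corresponds to δ₁^a δ₂^b (δ₃-part c), with δ₁ = ⟨1,0,0⟩, δ₂ = ⟨0,1,0⟩,
δ₃ = ⟨0,0,1⟩. -/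
@[ext]
structure Heis (r : ℕ) : Type where
  a : ℤ
  b : ℤ
  c : ℤ

namespace Heis

variable {r : ℕ}

instance : Mul (Heis r) :=
  ⟨fun x y => ⟨x.a + y.a, x.b + y.b, x.c + y.c + r * x.a * y.b⟩⟩

instance : One (Heis r) := ⟨⟨0, 0, 0⟩⟩

instance : Inv (Heis r) :=
  ⟨fun x => ⟨-x.a, -x.b, -x.c + r * x.a * x.b⟩⟩

@[simp] lemma mul_a (x y : Heis r) : (x * y).a = x.a + y.a := rfl
@[simp] lemma mul_b (x y : Heis r) : (x * y).b = x.b + y.b := rfl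
@[simp] lemma mul_c (x y : Heis r) : (x * y).c = x.c + y.c + r * x.a * y.b := rfl
@[simp] lemma one_a : (1 : Heis r).a = 0 := rfl
@[simp] lemma one_b : (1 : Heis r).b = 0 := rfl
@[simp] lemma one_c : (1 : Heis r).c = 0 := rfl
@[simp] lemma inv_a (x : Heis r) : x⁻¹.a = -x.a := rfl
@[simp] lemma inv_b (x : Heis r) : x⁻¹.b = -x.b := rfl
@[simp] lemma inv_c (x : Heis r) : x⁻¹.c = -x.c + r * x.a * x.b := rfl

instance instGroup : Group (Heis r) where
  mul_assoc x y z := by ext <;> simp <;> ring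
  one_mul x := by ext <;> simp
  mul_one x := by ext <;> simp
  inv_mul_cancel x := by ext <;> simp <;> ring

/-- The generator δ₁ of H(r). -/
def δ₁ : Heis r := ⟨1, 0, 0⟩

/-- The generator δ₂ of H(r). -/
def δ₂ : Heis r := ⟨0, 1, 0⟩

/-- The generator δ₃ of H(r); it generates the center of H(r) (for r > 0). -/
def δ₃ : Heis r := ⟨0, 0, 1⟩

end Heis

namespace Heis

variable {r : ℕ}

-- zpow lemmas
lemma zpowA (v m : ℤ) : (⟨v, 0, 0⟩ : Heis r) ^ m = ⟨m * v, 0, 0⟩ := by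
  induction m using Int.induction_on with
  | zero => ext <;> simp
  | succ n ih => rw [zpow_add_one, ih]; ext <;> simp <;> ring
  | pred n ih => rw [zpow_sub_one, ih]; ext <;> simp <;> ring

lemma zpowB (v m : ℤ) : (⟨0, v, 0⟩ : Heis r) ^ m = ⟨0, m * v, 0⟩ := by
  induction m using Int.induction_on with
  | zero => ext <;> simp
  | succ n ih => rw [zpow_add_one, ih]; ext <;> simp <;> ring
  | pred n ih => rw [zpow_sub_one, ih]; ext <;> simp <;> ring

lemma zpowC (v m : ℤ) : (⟨0, 0, v⟩ : Heis r) ^ m = ⟨0, 0, m * v⟩ := by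
  induction m using Int.induction_on with
  | zero => ext <;> simp
  | succ n ih => rw [zpow_add_one, ih]; ext <;> simp <;> ring
  | pred n ih => rw [zpow_sub_one, ih]; ext <;> simp <;> ring

lemma a_zpow (x : Heis r) (m : ℤ) : (x ^ m).a = m * x.a := by
  induction m using Int.induction_on with
  | zero => simp
  | succ n ih => rw [zpow_add_one]; simp only [mul_a, ih]; ring
  | pred n ih => rw [zpow_sub_one]; simp only [mul_a, inv_a, ih]; ring

lemma b_zpow (x : Heis r) (m : ℤ) : (x ^ m).b = m * x.b := by
  induction m using Int.induction_on with
  | zero => simp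
  | succ n ih => rw [zpow_add_one]; simp only [mul_b, ih]; ring
  | pred n ih => rw [zpow_sub_one]; simp only [mul_b, inv_b, ih]; ring

end Heis

-- positive generator of a nontrivial subgroup of ℤ
lemma exists_pos_gen (S : AddSubgroup ℤ) (n : ℤ) (hn : n ∈ S) (h : n ≠ 0) :
    ∃ g : ℤ, 0 < g ∧ g ∈ S ∧ ∀ m ∈ S, g ∣ m := by
  obtain ⟨a, ha⟩ := Int.subgroup_cyclic S
  have hmem : ∀ m : ℤ, m ∈ S ↔ a ∣ m := by
    intro m
    rw [ha, AddSubgroup.mem_closure_singleton]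
    constructor
    · rintro ⟨k, rfl⟩; exact ⟨k, by rw [zsmul_eq_mul]; push_cast; ring⟩
    · rintro ⟨k, rfl⟩; exact ⟨k, by rw [zsmul_eq_mul]; push_cast; ring⟩
  have ha0 : a ≠ 0 := by
    rintro rfl
    exact h (by simpa using (hmem n).1 hn)
  refine ⟨|a|, abs_pos.mpr ha0, (hmem _).2 ((dvd_abs a a).mpr dvd_rfl), fun m hm => (abs_dvd _ _).mpr ((hmem m).1 hm)⟩

-- triangular number additivity
lemma Tadd (m m' : ℤ) : (m + m') * ((m + m') - 1) / 2 = m * (m - 1) / 2 + m' * (m' - 1) / 2 + m * m' := by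
  have h : ∀ a : ℤ, 2 ∣ a * (a - 1) := by
    intro a
    rcases Int.even_or_odd a with he | ho
    · exact Dvd.dvd.mul_right he.two_dvd _
    · obtain ⟨k, hk⟩ := ho
      exact ⟨a * k, by rw [hk]; ring⟩
  obtain ⟨x, hx⟩ := h (m + m')
  obtain ⟨y, hy⟩ := h m
  obtain ⟨z, hz⟩ := h m'
  rw [hx, hy, hz, Int.mul_ediv_cancel_left _ (by norm_num), Int.mul_ediv_cancel_left _ (by norm_num),
    Int.mul_ediv_cancel_left _ (by norm_num)]
  nlinarith [hx, hy, hz]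

lemma heisHom_exists (r s' : ℕ) (p q t s u cz : ℤ) (hcz : 0 < cz) (hp : 0 < p) (hs : 0 < s)
    (hrel : cz * (s' : ℤ) = r * p * s) :
    ∃ F : Heis s' →* Heis r,
      Function.Injective F ∧
      (∀ m n k : ℤ, F ⟨m, n, k⟩ =
        ⟨m * p, m * q + n * s, cz * k + t * m + u * n + r * p * q * (m * (m - 1) / 2)⟩) := by
  have hmul : ∀ x y : Heis s',
      (⟨(x*y).a * p, (x*y).a * q + (x*y).b * s,
        cz * (x*y).c + t * (x*y).a + u * (x*y).b + r * p * q * ((x*y).a * ((x*y).a - 1) / 2)⟩ : Heis r)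
      = ⟨x.a * p, x.a * q + x.b * s,
          cz * x.c + t * x.a + u * x.b + r * p * q * (x.a * (x.a - 1) / 2)⟩ *
        ⟨y.a * p, y.a * q + y.b * s,
          cz * y.c + t * y.a + u * y.b + r * p * q * (y.a * (y.a - 1) / 2)⟩ := by
    intro x y
    ext
    · simp; ring
    · simp; ring
    · simp only [Heis.mul_a, Heis.mul_b, Heis.mul_c]
      linear_combination (r * p * q : ℤ) * (Tadd x.a y.a) + (x.a * y.b) * hrel
  refine ⟨MonoidHom.mk' (fun x => ⟨x.a * p, x.a * q + x.b * s,
      cz * x.c + t * x.a + u * x.b + r * p * q * (x.a * (x.a - 1) / 2)⟩) hmul,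
    ?_, fun m n k => rfl⟩
  intro x y h
  have ha : x.a * p = y.a * p := congrArg Heis.a h
  have hA : x.a = y.a := mul_right_cancel₀ (by omega) ha
  have hb : x.a * q + x.b * s = y.a * q + y.b * s := congrArg Heis.b h
  have hB : x.b = y.b := by
    rw [hA] at hb
    have : x.b * s = y.b * s := by omega
    exact mul_right_cancel₀ (by omega) this
  have hc : cz * x.c + t * x.a + u * x.b + r * p * q * (x.a * (x.a - 1) / 2)
      = cz * y.c + t * y.a + u * y.b + r * p * q * (y.a * (y.a - 1) / 2) := congrArg Heis.c h
  rw [hA, hB] at hc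
  have hC : x.c = y.c := by
    have : cz * x.c = cz * y.c := by omega
    exact mul_left_cancel₀ (by omega) this
  ext <;> assumption

lemma dvd_r_gcd (cz rr x y : ℤ) (hx : cz ∣ rr * x) (hy : cz ∣ rr * y) :
    cz ∣ rr * (Int.gcd x y : ℤ) := by
  have h : rr * (Int.gcd x y : ℤ) = (rr * x) * Int.gcdA x y + (rr * y) * Int.gcdB x y := by
    rw [Int.gcd_eq_gcd_ab]; ring
  rw [h]; exact dvd_add (hx.mul_right _) (hy.mul_right _)


/-- Lemma A.7: let Γ₀ be a normal subgroup of finite index in H(r) and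
G₀ = H(r)/Γ₀. Then there are integers a₁, a₂, a₃, b₁, b₂, b₃ with
a₁b₂ − a₂b₁ ≠ 0 and an integer c > 0 such that Γ₀ is generated by
δ₁^{a₁}δ₂^{a₂}δ₃^{a₃}, δ₁^{b₁}δ₂^{b₂}δ₃^{b₃} and δ₃^c; moreover c divides
r·gcd(a₁,a₂,b₁,b₂), Γ₀ ≅ H(r·|a₁b₂ − a₂b₁|/c), and G₀ contains a normal abelian
subgroup of index at most gcd(a₁,b₁). -/
theorem stmt_13 (r : ℕ) (hr : 0 < r) (Γ₀ : Subgroup (Heis r)) [Γ₀.Normal]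
    (hfi : Γ₀.FiniteIndex) :
    ∃ (a₁ a₂ a₃ b₁ b₂ b₃ : ℤ) (c : ℕ),
      a₁ * b₂ - a₂ * b₁ ≠ 0 ∧ 0 < c ∧
      Γ₀ = Subgroup.closure
        {Heis.δ₁ ^ a₁ * Heis.δ₂ ^ a₂ * Heis.δ₃ ^ a₃,
         Heis.δ₁ ^ b₁ * Heis.δ₂ ^ b₂ * Heis.δ₃ ^ b₃,
         Heis.δ₃ ^ (c : ℤ)} ∧
      c ∣ r * Nat.gcd (Int.gcd a₁ a₂) (Int.gcd b₁ b₂) ∧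
      Nonempty (Γ₀ ≃* Heis (r * (a₁ * b₂ - a₂ * b₁).natAbs / c)) ∧
      ∃ A : Subgroup (Heis r ⧸ Γ₀), A.Normal ∧ (∀ x y : A, x * y = y * x) ∧
        A.index ≤ Int.gcd a₁ b₁ := by
  classical
  haveI := hfi
  have hN0 : Γ₀.index ≠ 0 := hfi.index_ne_zero
  set N : ℕ := Γ₀.index with hNdef
  -- the three coordinate subgroups
  let Pa : AddSubgroup ℤ :=
    { carrier := {n | ∃ x ∈ Γ₀, Heis.a x = n}
      zero_mem' := ⟨1, Γ₀.one_mem, rfl⟩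
      add_mem' := by rintro a b ⟨x, hx, rfl⟩ ⟨y, hy, rfl⟩; exact ⟨x * y, Γ₀.mul_mem hx hy, rfl⟩
      neg_mem' := by rintro a ⟨x, hx, rfl⟩; exact ⟨x⁻¹, Γ₀.inv_mem hx, rfl⟩ }
  let Qb : AddSubgroup ℤ :=
    { carrier := {n | ∃ x ∈ Γ₀, Heis.a x = 0 ∧ Heis.b x = n}
      zero_mem' := ⟨1, Γ₀.one_mem, rfl, rfl⟩
      add_mem' := by
        rintro a b ⟨x, hx, hxa, rfl⟩ ⟨y, hy, hya, rfl⟩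
        exact ⟨x * y, Γ₀.mul_mem hx hy, by simp [hxa, hya], rfl⟩
      neg_mem' := by
        rintro a ⟨x, hx, hxa, rfl⟩
        exact ⟨x⁻¹, Γ₀.inv_mem hx, by simp [hxa], rfl⟩ }
  let Zc : AddSubgroup ℤ :=
    { carrier := {n | (⟨0, 0, n⟩ : Heis r) ∈ Γ₀}
      zero_mem' := by
        show (⟨0, 0, 0⟩ : Heis r) ∈ Γ₀
        have h : ((1 : Heis r)) = ⟨0, 0, 0⟩ := rfl
        exact h ▸ Γ₀.one_mem
      add_mem' := by
        intro a b ha hb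
        have h : (⟨0, 0, a⟩ : Heis r) * ⟨0, 0, b⟩ = ⟨0, 0, a + b⟩ := by ext <;> simp
        show (⟨0, 0, a + b⟩ : Heis r) ∈ Γ₀
        exact h ▸ Γ₀.mul_mem ha hb
      neg_mem' := by
        intro a ha
        have h : (⟨0, 0, a⟩ : Heis r)⁻¹ = ⟨0, 0, -a⟩ := by ext <;> simp
        show (⟨0, 0, -a⟩ : Heis r) ∈ Γ₀
        exact h ▸ Γ₀.inv_mem ha }
  -- nontrivial members
  have hNPa : (N : ℤ) ∈ Pa := by
    refine ⟨Heis.δ₁ ^ N, Subgroup.pow_index_mem Γ₀ Heis.δ₁, ?_⟩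
    rw [← zpow_natCast, show (Heis.δ₁ : Heis r) = ⟨1, 0, 0⟩ from rfl, Heis.zpowA]
    simp
  have hNQb : (N : ℤ) ∈ Qb := by
    refine ⟨Heis.δ₂ ^ N, Subgroup.pow_index_mem Γ₀ Heis.δ₂, ?_⟩
    rw [← zpow_natCast, show (Heis.δ₂ : Heis r) = ⟨0, 1, 0⟩ from rfl, Heis.zpowB]
    simp
  have hNZc : (N : ℤ) ∈ Zc := by
    show (⟨0, 0, (N : ℤ)⟩ : Heis r) ∈ Γ₀
    have h : (⟨0, 0, (N : ℤ)⟩ : Heis r) = Heis.δ₃ ^ N := by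
      rw [← zpow_natCast, show (Heis.δ₃ : Heis r) = ⟨0, 0, 1⟩ from rfl, Heis.zpowC]
      simp
    exact h ▸ Subgroup.pow_index_mem Γ₀ Heis.δ₃
  have hNne : (N : ℤ) ≠ 0 := by exact_mod_cast hN0
  obtain ⟨p, hp0, hpPa, hpdvd⟩ := exists_pos_gen Pa N hNPa hNne
  obtain ⟨s, hs0, hsQb, hsdvd⟩ := exists_pos_gen Qb N hNQb hNne
  obtain ⟨cz, hcz0, hczmem, hczdvd⟩ := exists_pos_gen Zc N hNZc hNne
  obtain ⟨x₁, hx₁, hx₁a⟩ := hpPa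
  obtain ⟨x₂, hx₂, hx₂a, hx₂b⟩ := hsQb
  have hczΓ : (⟨0, 0, cz⟩ : Heis r) ∈ Γ₀ := hczmem
  -- divisibility facts from normality
  have hdvd_rp : cz ∣ (r : ℤ) * p := by
    have hconj : x₁ * (Heis.δ₂ * x₁⁻¹ * Heis.δ₂⁻¹) ∈ Γ₀ :=
      Γ₀.mul_mem hx₁ (‹Γ₀.Normal›.conj_mem _ (Γ₀.inv_mem hx₁) Heis.δ₂)
    have heq : x₁ * (Heis.δ₂ * x₁⁻¹ * Heis.δ₂⁻¹) = ⟨0, 0, (r : ℤ) * x₁.a⟩ := by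
      ext <;> simp [Heis.δ₂] <;> ring
    have := hczdvd _ (heq ▸ hconj)
    rwa [hx₁a] at this
  have hdvd_rq : cz ∣ (r : ℤ) * x₁.b := by
    have hconj : x₁ * (Heis.δ₁ * x₁⁻¹ * Heis.δ₁⁻¹) ∈ Γ₀ :=
      Γ₀.mul_mem hx₁ (‹Γ₀.Normal›.conj_mem _ (Γ₀.inv_mem hx₁) Heis.δ₁)
    have heq : x₁ * (Heis.δ₁ * x₁⁻¹ * Heis.δ₁⁻¹) = ⟨0, 0, -((r : ℤ) * x₁.b)⟩ := by
      ext <;> simp [Heis.δ₁] <;> ring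
    have := hczdvd _ (heq ▸ hconj)
    exact (dvd_neg.mp this)
  have hdvd_rs : cz ∣ (r : ℤ) * s := by
    have hconj : x₂ * (Heis.δ₁ * x₂⁻¹ * Heis.δ₁⁻¹) ∈ Γ₀ :=
      Γ₀.mul_mem hx₂ (‹Γ₀.Normal›.conj_mem _ (Γ₀.inv_mem hx₂) Heis.δ₁)
    have heq : x₂ * (Heis.δ₁ * x₂⁻¹ * Heis.δ₁⁻¹) = ⟨0, 0, -((r : ℤ) * x₂.b)⟩ := by
      ext <;> simp [Heis.δ₁] <;> ring
    have := hczdvd _ (heq ▸ hconj)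
    rw [hx₂b] at this
    exact (dvd_neg.mp this)
  -- the central index and the new parameter s'
  set c : ℕ := cz.toNat with hcdef
  have hc : (c : ℤ) = cz := Int.toNat_of_nonneg hcz0.le
  have hc0 : 0 < c := by omega
  set s' : ℕ := r * (p * s).natAbs / c with hs'def
  have hdvd_rps : cz ∣ (r : ℤ) * p * s := hdvd_rp.mul_right s
  have hc_dvd : c ∣ r * (p * s).natAbs := by
    have h1 := Int.natAbs_dvd_natAbs.mpr hdvd_rps
    have h2 : ((r : ℤ) * p * s).natAbs = r * (p * s).natAbs := by
      rw [mul_assoc, Int.natAbs_mul, Int.natAbs_natCast]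
    have h3 : cz.natAbs = c := by omega
    rwa [h2, h3] at h1
  have hrel : cz * (s' : ℤ) = (r : ℤ) * p * s := by
    have h1 : c * s' = r * (p * s).natAbs := Nat.mul_div_cancel' hc_dvd
    have h2 : ((p * s).natAbs : ℤ) = p * s := Int.natAbs_of_nonneg (by positivity)
    have h3 : (c : ℤ) * (s' : ℤ) = (r : ℤ) * ((p * s).natAbs : ℤ) := by
      exact_mod_cast congrArg (Nat.cast : ℕ → ℤ) h1
    rw [h2] at h3
    rw [← hc, h3, mul_assoc]
  -- the homomorphism from Heis s' onto Γ₀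
  obtain ⟨F, Finj, Fform⟩ := heisHom_exists r s' p x₁.b x₁.c s x₂.c cz hcz0 hp0 hs0 hrel
  have hx1eq : x₁ = ⟨p, x₁.b, x₁.c⟩ := by ext <;> simp [hx₁a]
  have hx2eq : x₂ = ⟨0, s, x₂.c⟩ := by ext <;> simp [hx₂a, hx₂b]
  have hFδ1 : F ⟨1, 0, 0⟩ = x₁ := by
    rw [Fform, hx1eq]; ext <;> simp
  have hFδ2 : F ⟨0, 1, 0⟩ = x₂ := by
    rw [Fform, hx2eq]; ext <;> simp
  have hFδ3 : F ⟨0, 0, 1⟩ = (⟨0, 0, cz⟩ : Heis r) := by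
    rw [Fform]; ext <;> simp
  -- decomposition of elements of Γ₀
  have key : ∀ x ∈ Γ₀, ∃ m n j : ℤ,
      x = x₁ ^ m * x₂ ^ n * (⟨0, 0, cz⟩ : Heis r) ^ j := by
    intro x hx
    obtain ⟨m, hm⟩ := hpdvd x.a ⟨x, hx, rfl⟩
    have hyΓ : (x₁ ^ m)⁻¹ * x ∈ Γ₀ := Γ₀.mul_mem (Γ₀.inv_mem (Γ₀.zpow_mem hx₁ m)) hx
    have hya : ((x₁ ^ m)⁻¹ * x).a = 0 := by
      simp [Heis.a_zpow, hx₁a, hm]; ring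
    obtain ⟨n, hn⟩ := hsdvd ((x₁ ^ m)⁻¹ * x).b ⟨_, hyΓ, hya, rfl⟩
    have hwΓ : (x₂ ^ n)⁻¹ * ((x₁ ^ m)⁻¹ * x) ∈ Γ₀ :=
      Γ₀.mul_mem (Γ₀.inv_mem (Γ₀.zpow_mem hx₂ n)) hyΓ
    have hwa : ((x₂ ^ n)⁻¹ * ((x₁ ^ m)⁻¹ * x)).a = 0 := by
      simp [Heis.a_zpow, hx₂a, hya]
    have hwb : ((x₂ ^ n)⁻¹ * ((x₁ ^ m)⁻¹ * x)).b = 0 := by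
      simp [Heis.b_zpow, hx₂b, hn]; ring
    have hwc : (x₂ ^ n)⁻¹ * ((x₁ ^ m)⁻¹ * x)
        = ⟨0, 0, ((x₂ ^ n)⁻¹ * ((x₁ ^ m)⁻¹ * x)).c⟩ := by
      ext <;> simp [hwa, hwb]
    obtain ⟨j, hj⟩ := hczdvd _ (hwc ▸ hwΓ)
    refine ⟨m, n, j, ?_⟩
    have hwz : (x₂ ^ n)⁻¹ * ((x₁ ^ m)⁻¹ * x) = (⟨0, 0, cz⟩ : Heis r) ^ j := by
      rw [Heis.zpowC, hwc]
      ext <;> simp [hj] <;> ring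
    rw [← hwz]
    group
  set qv := x₁.b with hqv
  set tv := x₁.c with htv
  set uv := x₂.c with huv
  clear_value qv tv uv
  -- generators as words in the δ's
  have hE1 : (Heis.δ₁ : Heis r) ^ p * Heis.δ₂ ^ qv * Heis.δ₃ ^ (tv - r * p * qv) = x₁ := by
    rw [show (Heis.δ₁ : Heis r) = ⟨1, 0, 0⟩ from rfl, show (Heis.δ₂ : Heis r) = ⟨0, 1, 0⟩ from rfl,
      show (Heis.δ₃ : Heis r) = ⟨0, 0, 1⟩ from rfl, Heis.zpowA, Heis.zpowB, Heis.zpowC, hx1eq]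
    ext <;> simp <;> ring
  have hE2 : (Heis.δ₁ : Heis r) ^ (0 : ℤ) * Heis.δ₂ ^ s * Heis.δ₃ ^ uv = x₂ := by
    rw [show (Heis.δ₁ : Heis r) = ⟨1, 0, 0⟩ from rfl, show (Heis.δ₂ : Heis r) = ⟨0, 1, 0⟩ from rfl,
      show (Heis.δ₃ : Heis r) = ⟨0, 0, 1⟩ from rfl, Heis.zpowA, Heis.zpowB, Heis.zpowC, hx2eq]
    ext <;> simp
  have hE3 : (Heis.δ₃ : Heis r) ^ (c : ℤ) = (⟨0, 0, cz⟩ : Heis r) := by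
    rw [show (Heis.δ₃ : Heis r) = ⟨0, 0, 1⟩ from rfl, Heis.zpowC]
    ext <;> simp [hc]
  refine ⟨p, qv, tv - r * p * qv, 0, s, uv, c, ?_, hc0, ?_, ?_, ?_, ?_⟩
  · -- determinant nonzero
    simpa using (mul_pos hp0 hs0).ne'
  · -- closure equality
    apply le_antisymm
    · -- Γ₀ ≤ closure
      intro x hx
      obtain ⟨m, n, j, hdec⟩ := key x hx
      have m1 : x₁ ∈ Subgroup.closure {(Heis.δ₁ : Heis r) ^ p * Heis.δ₂ ^ qv * Heis.δ₃ ^ (tv - r * p * qv), Heis.δ₁ ^ (0 : ℤ) * Heis.δ₂ ^ s * Heis.δ₃ ^ uv, Heis.δ₃ ^ (c : ℤ)} := by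
        rw [← hE1]
        exact Subgroup.subset_closure (Set.mem_insert _ _)
      have m2 : x₂ ∈ Subgroup.closure {(Heis.δ₁ : Heis r) ^ p * Heis.δ₂ ^ qv * Heis.δ₃ ^ (tv - r * p * qv), Heis.δ₁ ^ (0 : ℤ) * Heis.δ₂ ^ s * Heis.δ₃ ^ uv, Heis.δ₃ ^ (c : ℤ)} := by
        rw [← hE2]
        exact Subgroup.subset_closure (Set.mem_insert_of_mem _ (Set.mem_insert _ _))
      have m3 : (⟨0, 0, cz⟩ : Heis r) ∈ Subgroup.closure {(Heis.δ₁ : Heis r) ^ p * Heis.δ₂ ^ qv * Heis.δ₃ ^ (tv - r * p * qv), Heis.δ₁ ^ (0 : ℤ) * Heis.δ₂ ^ s * Heis.δ₃ ^ uv, Heis.δ₃ ^ (c : ℤ)} := by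
        rw [← hE3]
        exact Subgroup.subset_closure (Set.mem_insert_of_mem _ (Set.mem_insert_of_mem _ rfl))
      rw [hdec]
      exact Subgroup.mul_mem _ (Subgroup.mul_mem _ (Subgroup.zpow_mem _ m1 m)
        (Subgroup.zpow_mem _ m2 n)) (Subgroup.zpow_mem _ m3 j)
    · -- closure ≤ Γ₀
      rw [Subgroup.closure_le]
      rintro e he
      simp only [Set.mem_insert_iff, Set.mem_singleton_iff] at he
      rcases he with rfl | rfl | rfl
      · rw [hE1]; exact hx₁
      · rw [hE2]; exact hx₂
      · rw [hE3]; exact hczΓ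
  · -- divisibility
    have hg1 : cz ∣ (r : ℤ) * (Int.gcd p qv : ℤ) := dvd_r_gcd _ _ _ _ hdvd_rp hdvd_rq
    have hg2 : cz ∣ (r : ℤ) * (Int.gcd 0 s : ℤ) := dvd_r_gcd _ _ _ _ (by simp) hdvd_rs
    have hg : cz ∣ (r : ℤ) * (Int.gcd (Int.gcd p qv : ℤ) (Int.gcd 0 s : ℤ) : ℤ) :=
      dvd_r_gcd _ _ _ _ hg1 hg2
    have hgeq : Int.gcd ((Int.gcd p qv : ℕ) : ℤ) ((Int.gcd 0 s : ℕ) : ℤ)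
        = Nat.gcd (Int.gcd p qv) (Int.gcd 0 s) := by
      simp [Int.gcd, Int.natAbs_natCast, Int.natAbs_abs]
    rw [hgeq] at hg
    rw [← hc] at hg
    exact_mod_cast hg
  · -- the isomorphism
    have hr' : r * (p * s - qv * 0).natAbs / c = s' := by norm_num [hs'def]
    rw [hr']
    have hrange : ∀ x' : Heis s', F x' ∈ Γ₀ := by
      intro x'
      have hdecomp : x' = (⟨1, 0, 0⟩ : Heis s') ^ x'.a * (⟨0, 1, 0⟩ : Heis s') ^ x'.b *
          (⟨0, 0, 1⟩ : Heis s') ^ (x'.c - s' * x'.a * x'.b) := by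
        rw [Heis.zpowA, Heis.zpowB, Heis.zpowC]
        ext <;> simp <;> ring
      rw [hdecomp, map_mul, map_mul, map_zpow, map_zpow, map_zpow, hFδ1, hFδ2, hFδ3]
      exact Subgroup.mul_mem _ (Subgroup.mul_mem _ (Subgroup.zpow_mem _ hx₁ _)
        (Subgroup.zpow_mem _ hx₂ _)) (Subgroup.zpow_mem _ hczΓ _)
    let F' : Heis s' →* Γ₀ := F.codRestrict Γ₀ hrange
    have hF'inj : Function.Injective F' := fun a b hab => Finj (Subtype.ext_iff.mp hab)
    have hF'surj : Function.Surjective F' := by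
      rintro ⟨x, hx⟩
      obtain ⟨m, n, j, hdec⟩ := key x hx
      refine ⟨(⟨1, 0, 0⟩ : Heis s') ^ m * (⟨0, 1, 0⟩ : Heis s') ^ n * (⟨0, 0, 1⟩ : Heis s') ^ j, ?_⟩
      apply Subtype.ext
      show F _ = x
      rw [map_mul, map_mul, map_zpow, map_zpow, map_zpow, hFδ1, hFδ2, hFδ3, hdec]
    exact ⟨(MulEquiv.ofBijective F' ⟨hF'inj, hF'surj⟩).symm⟩
  · -- the abelian normal subgroup
    set np : ℕ := p.toNat with hnpdef
    have hnp : (np : ℤ) = p := Int.toNat_of_nonneg hp0.le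
    have hnp0 : 0 < np := by omega
    haveI : NeZero np := ⟨by omega⟩
    let K : Subgroup (Heis r) :=
      { carrier := {x | Heis.a x = 0}
        one_mem' := rfl
        mul_mem' := by
          intro a b ha hb
          show (a * b).a = 0
          have ha' : a.a = 0 := ha
          have hb' : b.a = 0 := hb
          simp [ha', hb']
        inv_mem' := by
          intro a ha
          show a⁻¹.a = 0
          have ha' : a.a = 0 := ha
          simp [ha'] }
    have hKn : K.Normal := by
      refine ⟨fun n hn g => ?_⟩
      show (g * n * g⁻¹).a = 0
      have hn' : n.a = 0 := hn
      simp [hn']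
    refine ⟨K.map (QuotientGroup.mk' Γ₀), hKn.map _ (QuotientGroup.mk'_surjective Γ₀), ?_, ?_⟩
    · -- abelian
      rintro ⟨x, hxA⟩ ⟨y, hyA⟩
      obtain ⟨kx, hkx, rfl⟩ := Subgroup.mem_map.mp hxA
      obtain ⟨ky, hky, rfl⟩ := Subgroup.mem_map.mp hyA
      apply Subtype.ext
      show QuotientGroup.mk' Γ₀ kx * QuotientGroup.mk' Γ₀ ky
          = QuotientGroup.mk' Γ₀ ky * QuotientGroup.mk' Γ₀ kx
      rw [← map_mul, ← map_mul]
      congr 1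
      have hkxa : kx.a = 0 := hkx
      have hkya : ky.a = 0 := hky
      ext <;> simp [hkxa, hkya] <;> ring
    · -- index bound
      have hidx : (K.map (QuotientGroup.mk' Γ₀)).index = (K ⊔ Γ₀).index := by
        rw [Subgroup.index_map, (QuotientGroup.mk' Γ₀).range_eq_top_of_surjective
          (QuotientGroup.mk'_surjective Γ₀), Subgroup.index_top, mul_one,
          QuotientGroup.ker_mk']
      let ψ : Heis r →* Multiplicative (ZMod np) :=
        MonoidHom.mk' (fun x => Multiplicative.ofAdd ((Heis.a x : ZMod np)))
          (by intro x y; simp [← ofAdd_add])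
      have hker : ψ.ker ≤ K ⊔ Γ₀ := by
        intro x hx
        have hx' : ((x.a : ℤ) : ZMod np) = 0 := by
          have : Multiplicative.ofAdd ((x.a : ZMod np)) = 1 := hx
          exact_mod_cast this
        have hdvd : (np : ℤ) ∣ x.a := (ZMod.intCast_zmod_eq_zero_iff_dvd _ _).mp hx'
        rw [hnp] at hdvd
        obtain ⟨m, hm⟩ := hdvd
        have h1 : x₁ ^ m ∈ K ⊔ Γ₀ := Subgroup.mem_sup_right (Subgroup.zpow_mem _ hx₁ m)
        have h2 : (x₁ ^ m)⁻¹ * x ∈ K ⊔ Γ₀ := by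
          apply Subgroup.mem_sup_left
          show ((x₁ ^ m)⁻¹ * x).a = 0
          simp only [Heis.mul_a, Heis.inv_a, Heis.a_zpow, hx₁a, hm]
          ring
        have := Subgroup.mul_mem _ h1 h2
        rwa [mul_inv_cancel_left] at this
      have hdvd1 : (K ⊔ Γ₀).index ∣ ψ.ker.index := Subgroup.index_dvd_of_le hker
      have hkerindex : ψ.ker.index ∣ np := by
        rw [Subgroup.index_ker]
        have h1 : Nat.card ψ.range ∣ Nat.card (Multiplicative (ZMod np)) :=
          Subgroup.card_subgroup_dvd_card _
        have h2 : Nat.card (Multiplicative (ZMod np)) = np :=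
          (Nat.card_congr (Multiplicative.toAdd)).trans (Nat.card_zmod np)
        rwa [h2] at h1
      have hfinal : (K.map (QuotientGroup.mk' Γ₀)).index ∣ np := by
        rw [hidx]; exact hdvd1.trans hkerindex
      have hle : (K.map (QuotientGroup.mk' Γ₀)).index ≤ np := Nat.le_of_dvd hnp0 hfinal
      have hgcd : Int.gcd p 0 = np := by
        rw [Int.gcd_zero_right]
        omega
      rw [hgcd]
      exact hle
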